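/- Let N ≥ 1 be an integer and define f : ℝ → ℝ by f(θ) = (2 + 2cos θ)^{N/2}. Then the convolution g(t) = (1/π) ∫_{−π}^{π} f(θ) f(t − θ) dθ satisfies g(−t) = g(t) for all t, g is strictly decreasing on (0, π), and g is strictly increasing on (−π, 0). -/
import Mathlib

open Real intervalIntegral

private lemma fF_cont (e : ℝ) (he : 0 ≤ e) :
    Continuous (fun x : ℝ => (2 + 2 * Real.cos x) ^ e) :=
  (continuous_const.add (continuous_const.mul Real.continuous_cos)).rpow_const
    (fun _ => Or.inr he)

private lemma fF_lt (e : ℝ) (he : 0 < e) {x y : ℝ} (h : Real.cos x < Real.cos y) :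
    (2 + 2 * Real.cos x) ^ e < (2 + 2 * Real.cos y) ^ e := by
  apply Real.rpow_lt_rpow _ (by linarith) he
  nlinarith [Real.neg_one_le_cos x]

private lemma fF_even (e : ℝ) (x : ℝ) :
    (2 + 2 * Real.cos (-x)) ^ e = (2 + 2 * Real.cos x) ^ e := by
  rw [Real.cos_neg]

/-- Let `f(θ) = (2 + 2 cos θ)^{N/2}` (which equals `|(e^{iθ} + 1)^N|`). Then the convolution
`g(t) = (1/π) ∫_{-π}^{π} f(θ) f(t - θ) dθ` is even, strictly decreasing on `(0, π)`, and
strictly increasing on `(-π, 0)`. -/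
theorem convolution_monotone (N : ℕ) (hN : 1 ≤ N)
    (f : ℝ → ℝ) (hf : ∀ θ : ℝ, f θ = (2 + 2 * Real.cos θ) ^ ((N : ℝ) / 2))
    (g : ℝ → ℝ)
    (hg : ∀ t : ℝ, g t = (1 / Real.pi) * ∫ θ in (-Real.pi)..Real.pi, f θ * f (t - θ)) :
    (∀ t : ℝ, g (-t) = g t) ∧
      StrictAntiOn g (Set.Ioo 0 Real.pi) ∧
      StrictMonoOn g (Set.Ioo (-Real.pi) 0) := by
  set e : ℝ := (N : ℝ) / 2 with he_def
  have he : 0 < e := by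
    have : (1 : ℝ) ≤ (N : ℝ) := by exact_mod_cast hN
    simp only [he_def]; linarith
  have hfe : f = fun x => (2 + 2 * Real.cos x) ^ e := funext hf
  subst hfe
  set F : ℝ → ℝ := fun x => (2 + 2 * Real.cos x) ^ e with hF
  have hFc : Continuous F := fF_cont e he.le
  have hFeven : ∀ x, F (-x) = F x := fF_even e
  have hFper : Function.Periodic F (2 * Real.pi) := fun x => by
    simp only [hF, Real.cos_add_two_pi]
  -- evenness of g
  have geven : ∀ t : ℝ, g (-t) = g t := by
    intro t
    rw [hg, hg]
    congr 1
    have key : (∫ θ in (-Real.pi)..Real.pi, (fun θ => F θ * F (t - θ)) (-θ))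
        = ∫ θ in (-Real.pi)..Real.pi, F θ * F (t - θ) := by
      rw [intervalIntegral.integral_comp_neg (fun θ => F θ * F (t - θ))]
      norm_num
    calc (∫ θ in (-Real.pi)..Real.pi, F θ * F (-t - θ))
        = ∫ θ in (-Real.pi)..Real.pi, (fun θ => F θ * F (t - θ)) (-θ) := by
          apply intervalIntegral.integral_congr
          intro θ _
          simp only
          have h1 : F (-θ) = F θ := hFeven θ
          have h2 : F (-t - θ) = F (t - -θ) := by
            rw [show (-t - θ) = -(t - -θ) by ring, hFeven]
          rw [h1, h2]
      _ = ∫ θ in (-Real.pi)..Real.pi, F θ * F (t - θ) := key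
  -- main strict anti lemma
  have main : ∀ t₁ t₂ : ℝ, 0 < t₁ → t₁ < t₂ → t₂ < Real.pi → g t₂ < g t₁ := by
    intro t₁ t₂ ht₁ h12 ht₂
    set c : ℝ := (t₁ + t₂) / 2 with hc
    set δ : ℝ := (t₂ - t₁) / 2 with hδ
    have hcpos : 0 < c := by simp only [hc]; linarith
    have hclt : c < Real.pi := by simp only [hc]; linarith
    have hδpos : 0 < δ := by simp only [hδ]; linarith
    have hδlt : δ < Real.pi := by
      have := Real.pi_pos; simp only [hδ]; linarith
    have hsinc : 0 < Real.sin c := Real.sin_pos_of_pos_of_lt_pi hcpos hclt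
    have hsinδ : 0 < Real.sin δ := Real.sin_pos_of_pos_of_lt_pi hδpos hδlt
    -- integrability helpers
    have hint : ∀ t : ℝ, IntervalIntegrable (fun θ => F θ * F (t - θ))
        MeasureTheory.volume (-Real.pi) Real.pi := fun t =>
      (hFc.mul (hFc.comp (continuous_const.sub continuous_id))).intervalIntegrable _ _
    -- step 1: difference of integrals
    have step1 : g t₁ - g t₂ = (1 / Real.pi) *
        ∫ θ in (-Real.pi)..Real.pi, F θ * (F (t₁ - θ) - F (t₂ - θ)) := by
      rw [hg, hg, ← mul_sub, ← intervalIntegral.integral_sub (hint t₁) (hint t₂)]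
      congr 1
      apply intervalIntegral.integral_congr
      intro θ _; ring
    set K : ℝ → ℝ := fun θ => F θ * (F (t₁ - θ) - F (t₂ - θ)) with hK
    have hKper : Function.Periodic K (2 * Real.pi) := by
      intro x
      simp only [hK]
      have h1 : F (t₁ - (x + 2 * Real.pi)) = F (t₁ - x) := by
        rw [← hFper (t₁ - (x + 2 * Real.pi))]; ring_nf
      have h2 : F (t₂ - (x + 2 * Real.pi)) = F (t₂ - x) := by
        rw [← hFper (t₂ - (x + 2 * Real.pi))]; ring_nf
      rw [hFper x, h1, h2]
    have hKc : Continuous K :=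
      hFc.mul ((hFc.comp (continuous_const.sub continuous_id)).sub
        (hFc.comp (continuous_const.sub continuous_id)))
    -- step 2: shift by c
    have step2 : (∫ θ in (-Real.pi)..Real.pi, K θ)
        = ∫ θ in (-Real.pi)..Real.pi, K (θ + c) := by
      have e1 : (∫ θ in (-Real.pi)..(-Real.pi + 2 * Real.pi), K θ)
          = ∫ θ in (-Real.pi + c)..(-Real.pi + c + 2 * Real.pi), K θ :=
        hKper.intervalIntegral_add_eq _ _
      have e2 : (∫ θ in (-Real.pi)..Real.pi, K (θ + c))
          = ∫ θ in (-Real.pi + c)..(Real.pi + c), K θ :=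
        intervalIntegral.integral_comp_add_right K c
      rw [e2]
      have b1 : -Real.pi + 2 * Real.pi = Real.pi := by ring
      have b2 : -Real.pi + c + 2 * Real.pi = Real.pi + c := by ring
      rw [b1] at e1; rw [b2] at e1; exact e1
    -- step 3: K (θ + c) = F (θ + c) * (F (θ + δ) - F (θ - δ))
    have step3 : ∀ θ : ℝ, K (θ + c) = F (θ + c) * (F (θ + δ) - F (θ - δ)) := by
      intro θ
      simp only [hK]
      have h1 : F (t₁ - (θ + c)) = F (θ + δ) := by
        rw [← hFeven (t₁ - (θ + c))]
        congr 1
        simp only [hc, hδ]; ring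
      have h2 : F (t₂ - (θ + c)) = F (θ - δ) := by
        rw [← hFeven (t₂ - (θ + c))]
        congr 1
        simp only [hc, hδ]; ring
      rw [h1, h2]
    set G : ℝ → ℝ := fun θ => F (θ + c) * (F (θ + δ) - F (θ - δ)) with hG
    have hGc : Continuous G :=
      (hFc.comp (continuous_id.add continuous_const)).mul
        ((hFc.comp (continuous_id.add continuous_const)).sub
          (hFc.comp (continuous_id.sub continuous_const)))
    have step3' : (∫ θ in (-Real.pi)..Real.pi, K (θ + c))
        = ∫ θ in (-Real.pi)..Real.pi, G θ :=
      intervalIntegral.integral_congr (fun θ _ => step3 θ)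
    -- step 4: fold onto (0, π)
    have hGint : ∀ a b : ℝ, IntervalIntegrable G MeasureTheory.volume a b :=
      fun a b => hGc.intervalIntegrable a b
    have fold : (∫ θ in (-Real.pi)..Real.pi, G θ)
        = ∫ θ in (0 : ℝ)..Real.pi, (G (-θ) + G θ) := by
      have split : (∫ θ in (-Real.pi)..Real.pi, G θ)
          = (∫ θ in (-Real.pi)..(0:ℝ), G θ) + ∫ θ in (0:ℝ)..Real.pi, G θ :=
        (intervalIntegral.integral_add_adjacent_intervals (hGint _ _) (hGint _ _)).symm
      have refl : (∫ θ in (0:ℝ)..Real.pi, G (-θ)) = ∫ θ in (-Real.pi)..(0:ℝ), G θ := by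
        have := intervalIntegral.integral_comp_neg G (a := 0) (b := Real.pi)
        simpa using this
      have hnegc : Continuous fun θ : ℝ => G (-θ) := hGc.comp continuous_neg
      rw [split, ← refl]
      exact (intervalIntegral.integral_add (hnegc.intervalIntegrable _ _) (hGint _ _)).symm
    -- step 5: G(-θ) + G θ = (F(c-θ) - F(c+θ)) * (F(θ-δ) - F(θ+δ))
    have step5 : ∀ θ : ℝ, G (-θ) + G θ
        = (F (c - θ) - F (c + θ)) * (F (θ - δ) - F (θ + δ)) := by
      intro θ
      simp only [hG]
      have e1 : F (-θ + c) = F (c - θ) := by congr 1; ring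
      have e2 : F (-θ + δ) = F (θ - δ) := by
        rw [← hFeven (-θ + δ)]; congr 1; ring
      have e3 : F (-θ - δ) = F (θ + δ) := by
        rw [← hFeven (-θ - δ)]; congr 1; ring
      have e4 : F (θ + c) = F (c + θ) := by congr 1; ring
      rw [e1, e2, e3, e4]; ring
    -- positivity of the integrand on (0, π)
    have hpos : ∀ θ ∈ Set.Ioo (0:ℝ) Real.pi,
        0 < (F (c - θ) - F (c + θ)) * (F (θ - δ) - F (θ + δ)) := by
      intro θ ⟨hθ0, hθπ⟩
      have hsinθ : 0 < Real.sin θ := Real.sin_pos_of_pos_of_lt_pi hθ0 hθπ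
      have hA : F (c + θ) < F (c - θ) := by
        apply fF_lt e he
        rw [Real.cos_add, Real.cos_sub]
        nlinarith
      have hB : F (θ + δ) < F (θ - δ) := by
        apply fF_lt e he
        have : Real.cos (θ + δ) < Real.cos (θ - δ) := by
          rw [Real.cos_add, Real.cos_sub]
          nlinarith
        simpa using this
      exact mul_pos (by linarith) (by linarith)
    -- conclude
    have hintpos : 0 < ∫ θ in (0:ℝ)..Real.pi,
        (F (c - θ) - F (c + θ)) * (F (θ - δ) - F (θ + δ)) := by
      apply intervalIntegral.intervalIntegral_pos_of_pos_on
      · exact (((hFc.comp (continuous_const.sub continuous_id)).sub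
          (hFc.comp (continuous_const.add continuous_id))).mul
          ((hFc.comp (continuous_id.sub continuous_const)).sub
          (hFc.comp (continuous_id.add continuous_const)))).intervalIntegrable _ _
      · exact hpos
      · exact Real.pi_pos
    have final : 0 < g t₁ - g t₂ := by
      rw [step1, step2, step3', fold]
      rw [intervalIntegral.integral_congr (fun θ _ => step5 θ)]
      exact mul_pos (by positivity) hintpos
    linarith
  refine ⟨geven, ?_, ?_⟩
  · intro t₁ ⟨h1a, h1b⟩ t₂ ⟨h2a, h2b⟩ h12
    exact main t₁ t₂ h1a h12 h2b
  · intro t₁ ⟨h1a, h1b⟩ t₂ ⟨h2a, h2b⟩ h12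
    have : g (-t₁) < g (-t₂) := main (-t₂) (-t₁) (by linarith) (by linarith) (by linarith)
    rwa [geven t₁, geven t₂] at this
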